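/- arXiv:2006.16814 — 3 statements merged into one kernel-verified Lean document; each statement's English description precedes it below -/
import Mathlib

section
/- Let A be a dual Banach algebra and I a weak*-closed two-sided ideal of A (so that I is itself a dual Banach algebra with predual A_*/^⊥I). If H^1(A, I**) = {0}, then H^1_{w*}(A, I) = {0}. -/
/-!
Common definitions: duals, biduals, Arens products, module actions,
derivations, first cohomology-vanishing predicates, weak-star continuity.
-/

noncomputable section

open ContinuousLinearMap Filter Topology Function

namespace ArensPaper

variable (𝕜 : Type) [RCLike 𝕜]

/-- The (topological) dual of a normed space. -/
abbrev Du (X : Type) [NormedAddCommGroup X] [NormedSpace 𝕜 X] : Type :=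
  StrongDual 𝕜 X

/-- The bidual of a normed space. -/
abbrev Bi (X : Type) [NormedAddCommGroup X] [NormedSpace 𝕜 X] : Type :=
  Du 𝕜 (Du 𝕜 X)

/-- Canonical embedding of a normed space into its bidual. -/
abbrev inDu (X : Type) [NormedAddCommGroup X] [NormedSpace 𝕜 X] : X →L[𝕜] Bi 𝕜 X :=
  NormedSpace.inclusionInDoubleDual 𝕜 X

variable {X Y Z : Type} [NormedAddCommGroup X] [NormedSpace 𝕜 X]
  [NormedAddCommGroup Y] [NormedSpace 𝕜 Y] [NormedAddCommGroup Z] [NormedSpace 𝕜 Z]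

/-- The transpose (Banach-space adjoint) of a continuous linear map. -/
def tr (T : X →L[𝕜] Y) : Du 𝕜 Y →L[𝕜] Du 𝕜 X :=
  (compL 𝕜 X Y 𝕜).flip T

/-- The second transpose of a continuous linear map. -/
def bitr (T : X →L[𝕜] Y) : Bi 𝕜 X →L[𝕜] Bi 𝕜 Y :=
  tr 𝕜 (tr 𝕜 T)

/-- The adjoint of a continuous bilinear map `m : X × Y → Z`:
`⟨adj m z' x, y⟩ = ⟨z', m x y⟩`. -/
def adj (m : X →L[𝕜] Y →L[𝕜] Z) : Du 𝕜 Z →L[𝕜] X →L[𝕜] Du 𝕜 Y :=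
  ((compL 𝕜 X (Y →L[𝕜] Z) (Du 𝕜 Y)).flip m).comp (compL 𝕜 Y Z 𝕜)

/-- The first Arens (triple adjoint) extension of a continuous bilinear map
to the biduals: `⟨ar1 m F G, z'⟩ = ⟨F, fun x => ⟨G, fun y => ⟨z', m x y⟩⟩⟩`. -/
def ar1 (m : X →L[𝕜] Y →L[𝕜] Z) : Bi 𝕜 X →L[𝕜] Bi 𝕜 Y →L[𝕜] Bi 𝕜 Z :=
  adj 𝕜 (adj 𝕜 (adj 𝕜 m))

/-- The second Arens extension of a continuous bilinear map. -/
def ar2 (m : X →L[𝕜] Y →L[𝕜] Z) : Bi 𝕜 X →L[𝕜] Bi 𝕜 Y →L[𝕜] Bi 𝕜 Z :=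
  (ar1 𝕜 m.flip).flip

/-- A continuous bilinear map is Arens regular if its two Arens extensions agree. -/
def ArensRegularBil (m : X →L[𝕜] Y →L[𝕜] Z) : Prop :=
  ar1 𝕜 m = ar2 𝕜 m

/-- A map between dual spaces is weak*-weak*-continuous. -/
def WStarCont (f : Du 𝕜 X → Du 𝕜 Y) : Prop :=
  Continuous fun x : WeakDual 𝕜 X => (show WeakDual 𝕜 Y from f (show Du 𝕜 X from x))

/-- A map from a dual space to a normed space is weak*-weak-continuous. -/
def WStarWeakCont {B : Type} [NormedAddCommGroup B] [NormedSpace 𝕜 B]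
    (f : Du 𝕜 X → B) : Prop :=
  Continuous fun x : WeakDual 𝕜 X => (show WeakSpace 𝕜 B from f (show Du 𝕜 X from x))

/-- `D` is a derivation with respect to a product `p` on `C` and module actions
`l`, `r` of `C` on `E`. -/
def IsDer {C E : Type} [NormedAddCommGroup C] [NormedSpace 𝕜 C]
    [NormedAddCommGroup E] [NormedSpace 𝕜 E]
    (p : C → C → C) (l : C → E → E) (r : E → C → E) (D : C →L[𝕜] E) : Prop :=
  ∀ a b : C, D (p a b) = l a (D b) + r (D a) b

/-- `D` is an inner derivation for the module actions `l`, `r`. -/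
def IsInner {C E : Type} [NormedAddCommGroup C] [NormedSpace 𝕜 C]
    [NormedAddCommGroup E] [NormedSpace 𝕜 E]
    (l : C → E → E) (r : E → C → E) (D : C →L[𝕜] E) : Prop :=
  ∃ x : E, ∀ a : C, D a = l a x - r x a

/-- A Banach algebra has a left bounded approximate identity. -/
def HasLBAI (A : Type) [NonUnitalNormedRing A] : Prop :=
  ∃ (ι : Type) (L : Filter ι) (e : ι → A), L.NeBot ∧ (∃ c : ℝ, ∀ i, ‖e i‖ ≤ c) ∧
    ∀ a : A, Tendsto (fun i => e i * a) L (𝓝 a)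

/-- A Banach bimodule structure on `E` over the "Banach algebra" `(C, p)`. -/
structure BimodStr {C : Type} [NormedAddCommGroup C] [NormedSpace 𝕜 C]
    (p : C →L[𝕜] C →L[𝕜] C) (E : Type) [NormedAddCommGroup E] [NormedSpace 𝕜 E] :
    Type where
  l : C →L[𝕜] E →L[𝕜] E
  r : E →L[𝕜] C →L[𝕜] E
  l_mul : ∀ a b x, l (p a b) x = l a (l b x)
  r_mul : ∀ x a b, r (r x a) b = r x (p a b)
  lr : ∀ a x b, r (l a x) b = l a (r x b)

/-- A bundled Banach bimodule over the "Banach algebra" `(C, p)`. -/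
structure BBimod {C : Type} [NormedAddCommGroup C] [NormedSpace 𝕜 C]
    (p : C →L[𝕜] C →L[𝕜] C) : Type 1 where
  E : Type
  [grp : NormedAddCommGroup E]
  [mod : NormedSpace 𝕜 E]
  [cpl : CompleteSpace E]
  str : BimodStr 𝕜 p E

attribute [instance] BBimod.grp BBimod.mod BBimod.cpl

/-- Amenability of the "Banach algebra" `(C, p)`: every continuous derivation into the
dual of any Banach bimodule is inner. -/
def IsAmenableP {C : Type} [NormedAddCommGroup C] [NormedSpace 𝕜 C]
    (p : C →L[𝕜] C →L[𝕜] C) : Prop :=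
  ∀ (M : BBimod 𝕜 p) (D : C →L[𝕜] Du 𝕜 M.E),
    IsDer 𝕜 (fun a b => p a b)
      (fun a f => f.comp (M.str.r.flip a)) (fun f a => f.comp (M.str.l a)) D →
    IsInner 𝕜 (fun a f => f.comp (M.str.r.flip a)) (fun f a => f.comp (M.str.l a)) D

/-- Weak amenability of a Banach algebra: every continuous derivation into the dual
(with the dual actions of the regular bimodule) is inner. -/
def WeaklyAmenable (A : Type) [NonUnitalNormedRing A] [NormedSpace 𝕜 A]
    [IsScalarTower 𝕜 A A] [SMulCommClass 𝕜 A A] : Prop :=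
  ∀ D : A →L[𝕜] Du 𝕜 A,
    IsDer 𝕜 (fun a b => a * b)
      (fun a f => f.comp ((ContinuousLinearMap.mul 𝕜 A).flip a))
      (fun f a => f.comp (ContinuousLinearMap.mul 𝕜 A a)) D →
    IsInner 𝕜 (fun a f => f.comp ((ContinuousLinearMap.mul 𝕜 A).flip a))
      (fun f a => f.comp (ContinuousLinearMap.mul 𝕜 A a)) D

/-- The embedding of the predual `X` into the dual `A*`, given an identification
`j : A ≃ X*`. -/
def predualEmbed {A X : Type} [NormedAddCommGroup A] [NormedSpace 𝕜 A]
    [NormedAddCommGroup X] [NormedSpace 𝕜 X] (j : A ≃ₗᵢ[𝕜] Du 𝕜 X) (x : X) : Du 𝕜 A :=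
  (inDu 𝕜 X x).comp j.toLinearIsometry.toContinuousLinearMap

/-- `j : A ≃ X*` makes `A` a dual Banach algebra: the image of `X` in `A*` is a
submodule of `A*` for the dual actions. -/
def IsDualBanachAlgebra {A X : Type} [NonUnitalNormedRing A] [NormedSpace 𝕜 A]
    [IsScalarTower 𝕜 A A] [SMulCommClass 𝕜 A A]
    [NormedAddCommGroup X] [NormedSpace 𝕜 X] (j : A ≃ₗᵢ[𝕜] Du 𝕜 X) : Prop :=
  ∀ (a : A) (x : X),
    ((predualEmbed 𝕜 j x).comp ((ContinuousLinearMap.mul 𝕜 A).flip a)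
        ∈ Set.range (predualEmbed 𝕜 j)) ∧
    ((predualEmbed 𝕜 j x).comp (ContinuousLinearMap.mul 𝕜 A a)
        ∈ Set.range (predualEmbed 𝕜 j))

/-- A normed space is weakly sequentially complete. -/
def WSCSpace (E : Type) [NormedAddCommGroup E] [NormedSpace 𝕜 E] : Prop :=
  ∀ f : ℕ → E,
    (∀ φ : Du 𝕜 E, ∃ L : 𝕜, Tendsto (fun n => φ (f n)) atTop (𝓝 L)) →
    ∃ e : E, ∀ φ : Du 𝕜 E, Tendsto (fun n => φ (f n)) atTop (𝓝 (φ e))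

/-- Left multiplication by `a ∈ A` restricted to an ideal `I`. -/
def mulLRes {A : Type} [NonUnitalNormedRing A] [NormedSpace 𝕜 A]
    [IsScalarTower 𝕜 A A] [SMulCommClass 𝕜 A A] (I : Submodule 𝕜 A) (a : A)
    (h : ∀ x : I, a * (x : A) ∈ I) : I →L[𝕜] I :=
  ((ContinuousLinearMap.mul 𝕜 A a).comp I.subtypeL).codRestrict I h

/-- Right multiplication by `a ∈ A` restricted to an ideal `I`. -/
def mulRRes {A : Type} [NonUnitalNormedRing A] [NormedSpace 𝕜 A]
    [IsScalarTower 𝕜 A A] [SMulCommClass 𝕜 A A] (I : Submodule 𝕜 A) (a : A)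
    (h : ∀ x : I, (x : A) * a ∈ I) : I →L[𝕜] I :=
  (((ContinuousLinearMap.mul 𝕜 A).flip a).comp I.subtypeL).codRestrict I h


/-- Connes-amenability of the bidual algebra `(A**, p)`: every weak*-weak*-continuous
derivation into a normal dual Banach bimodule is inner. -/
def ConnesAmenableBidual {A : Type} [NonUnitalNormedRing A] [NormedSpace 𝕜 A]
    [IsScalarTower 𝕜 A A] [SMulCommClass 𝕜 A A]
    (p : Bi 𝕜 A →L[𝕜] Bi 𝕜 A →L[𝕜] Bi 𝕜 A) : Prop :=
  ∀ (X : Type) [NormedAddCommGroup X] [NormedSpace 𝕜 X] [CompleteSpace X]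
    (M : BimodStr 𝕜 p (Du 𝕜 X)),
    (∀ f : Du 𝕜 X, WStarCont 𝕜 (fun m : Bi 𝕜 A => M.l m f) ∧
        WStarCont 𝕜 (fun m : Bi 𝕜 A => M.r f m)) →
    ∀ D : Bi 𝕜 A →L[𝕜] Du 𝕜 X,
      IsDer 𝕜 (fun m n => p m n) (fun m f => M.l m f) (fun f m => M.r f m) D →
      WStarCont 𝕜 (fun m => D m) →
      IsInner 𝕜 (fun m f => M.l m f) (fun f m => M.r f m) D

/-- Port helper: the normed group structure on a submodule of a normed ring (the standard
`Submodule.normedAddCommGroup`, stated so that instance search finds it). -/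
instance instSubmoduleNormedAddCommGroup {𝕜 : Type} [RCLike 𝕜] {A : Type} [NonUnitalNormedRing A]
    [NormedSpace 𝕜 A] (I : Submodule 𝕜 A) : NormedAddCommGroup I :=
  Submodule.normedAddCommGroup I

lemma helly' {𝕜 : Type} [RCLike 𝕜] {E : Type} [NormedAddCommGroup E] [NormedSpace 𝕜 E]
    (F : Du 𝕜 (Du 𝕜 E)) {ι : Type} [Fintype ι] (φ : ι → Du 𝕜 E) :
    ∃ b : E, ∀ i, φ i b = F (φ i) := by
  classical
  let T : E →ₗ[𝕜] (ι → 𝕜) :=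
    { toFun := fun b i => φ i b
      map_add' := by intro a b; funext i; simp
      map_smul' := by intro c b; funext i; simp }
  by_contra h
  push_neg at h
  have hg' : (fun i => F (φ i)) ∉ LinearMap.range T := by
    rintro ⟨b, hb⟩
    obtain ⟨i, hi⟩ := h b
    exact hi (congrFun hb i)
  obtain ⟨f, hf1, hf2⟩ :=
    Submodule.exists_dual_map_eq_bot_of_notMem hg' inferInstance
  set c : ι → 𝕜 := fun i => f (Pi.single i 1) with hc
  have key : ∀ v : ι → 𝕜, f v = ∑ i, v i * c i := by
    intro v
    calc f v = f (∑ i, Pi.single i (v i)) := by rw [Finset.univ_sum_single]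
      _ = ∑ i, f (Pi.single i (v i)) := map_sum f _ _
      _ = ∑ i, v i * c i := by
          refine Finset.sum_congr rfl fun i _ => ?_
          have h1 : (Pi.single i (v i) : ι → 𝕜) = v i • (Pi.single i 1 : ι → 𝕜) := by
            rw [← Pi.single_smul, smul_eq_mul, mul_one]
          rw [h1, map_smul, smul_eq_mul]
  have hL : (∑ i, c i • φ i : Du 𝕜 E) = 0 := by
    ext b
    have hTb : f (T b) = 0 := by
      have hm : f (T b) ∈ (LinearMap.range T).map f :=
        Submodule.mem_map_of_mem ⟨b, rfl⟩
      rw [hf2] at hm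
      exact (Submodule.mem_bot 𝕜).mp hm
    have hkey := key (T b)
    simp only [ContinuousLinearMap.sum_apply, ContinuousLinearMap.smul_apply,
      ContinuousLinearMap.zero_apply, smul_eq_mul]
    rw [hTb] at hkey
    calc (∑ i, c i * φ i b) = ∑ i, (T b) i * c i := by
          refine Finset.sum_congr rfl fun i _ => ?_
          simp [T, mul_comm]
      _ = 0 := hkey.symm
  have hFL : (0:𝕜) = ∑ i, c i * F (φ i) := by
    have := congrArg F hL
    simpa [map_sum, smul_eq_mul] using this.symm
  apply hf1
  rw [key, hFL]
  exact Finset.sum_congr rfl fun i _ => mul_comm _ _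

set_option maxHeartbeats 4000000 in
/-- Let `A` be a dual Banach algebra (with predual `X`) and `I` a weak*-closed two-sided
ideal of `A`.  If `H^1(A, I**) = {0}`, then `H^1_{w*}(A, I) = {0}`. -/
theorem statement14 {𝕜 : Type} [RCLike 𝕜] {A : Type}
    [NonUnitalNormedRing A] [NormedSpace 𝕜 A] [IsScalarTower 𝕜 A A]
    [SMulCommClass 𝕜 A A] [CompleteSpace A]
    {X : Type} [NormedAddCommGroup X] [NormedSpace 𝕜 X] [CompleteSpace X]
    -- `A` is a dual Banach algebra with predual `X`
    (j : A ≃ₗᵢ[𝕜] Du 𝕜 X) (hdual : IsDualBanachAlgebra 𝕜 j)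
    -- `I` is a two-sided ideal of `A`
    (I : Submodule 𝕜 A)
    (hI : ∀ (a : A) (x : I), a * (x : A) ∈ I ∧ (x : A) * a ∈ I)
    -- `I` is weak*-closed
    (hwcl : IsClosed {x : WeakDual 𝕜 X | j.symm (show Du 𝕜 X from x) ∈ I})
    -- `H^1(A, I**) = {0}`
    (h1 : ∀ D : A →L[𝕜] Du 𝕜 (Du 𝕜 I),
      IsDer 𝕜 (fun a b => a * b)
        (fun (a : A) (F : Du 𝕜 (Du 𝕜 I)) =>
          F.comp (tr 𝕜 (mulLRes 𝕜 I a fun x => (hI a x).1)))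
        (fun (F : Du 𝕜 (Du 𝕜 I)) (a : A) =>
          F.comp (tr 𝕜 (mulRRes 𝕜 I a fun x => (hI a x).2))) D →
      IsInner 𝕜
        (fun (a : A) (F : Du 𝕜 (Du 𝕜 I)) =>
          F.comp (tr 𝕜 (mulLRes 𝕜 I a fun x => (hI a x).1)))
        (fun (F : Du 𝕜 (Du 𝕜 I)) (a : A) =>
          F.comp (tr 𝕜 (mulRRes 𝕜 I a fun x => (hI a x).2))) D) :
    -- `H^1_{w*}(A, I) = {0}`
    ∀ D : A →L[𝕜] I,
      IsDer 𝕜 (fun a b => a * b)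
        (fun (a : A) (x : I) => mulLRes 𝕜 I a (fun y => (hI a y).1) x)
        (fun (x : I) (a : A) => mulRRes 𝕜 I a (fun y => (hI a y).2) x) D →
      -- `D` is weak*-weak*-continuous
      (Continuous fun x : WeakDual 𝕜 X =>
        (show WeakDual 𝕜 X from j (I.subtypeL (D (j.symm (show Du 𝕜 X from x)))))) →
      IsInner 𝕜
        (fun (a : A) (x : I) => mulLRes 𝕜 I a (fun y => (hI a y).1) x)
        (fun (x : I) (a : A) => mulRRes 𝕜 I a (fun y => (hI a y).2) x) D := by
  intro D hD _hcont
  classical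
  -- the predual functionals, restricted to the ideal `I`
  let Φlin : X →ₗ[𝕜] Du 𝕜 I :=
    { toFun := fun x => (predualEmbed 𝕜 j x).comp I.subtypeL
      map_add' := by
        intro x y
        ext z
        simp [predualEmbed, NormedSpace.dual_def]
      map_smul' := by
        intro c x
        ext z
        simp [predualEmbed, NormedSpace.dual_def] }
  have Φlinapply : ∀ (x : X) (z : I), Φlin x z = (j (z : A)) x := by
    intro x z
    simp [Φlin, predualEmbed, NormedSpace.dual_def]
  have Φbound : ∀ x : X, ‖Φlin x‖ ≤ 1 * ‖x‖ := by
    intro x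
    rw [one_mul]
    refine ContinuousLinearMap.opNorm_le_bound _ (norm_nonneg x) fun z => ?_
    rw [Φlinapply]
    calc ‖(j (z : A)) x‖ ≤ ‖j (z : A)‖ * ‖x‖ := (j ((z : A))).le_opNorm x
      _ = ‖(z : A)‖ * ‖x‖ := by rw [j.norm_map]
      _ = ‖x‖ * ‖z‖ := by rw [mul_comm]; rfl
  let Φ : X →L[𝕜] Du 𝕜 I := Φlin.mkContinuous 1 Φbound
  have Φapply : ∀ (x : X) (z : I), Φ x z = (j (z : A)) x := Φlinapply
  -- the composed derivation into the bidual of `I`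
  let D2 : A →L[𝕜] Du 𝕜 (Du 𝕜 I) := (inDu 𝕜 I).comp D
  have htr : ∀ (T : I →L[𝕜] I) (φ : Du 𝕜 I), tr 𝕜 T φ = φ.comp T := fun T φ => rfl
  have hbitr : ∀ (T : I →L[𝕜] I) (z : I),
      inDu 𝕜 I (T z) = (inDu 𝕜 I z).comp (tr 𝕜 T) := by
    intro T z
    ext φ
    simp [htr, NormedSpace.dual_def]
  have hder2 : IsDer 𝕜 (fun a b : A => a * b)
      (fun (a : A) (F : Du 𝕜 (Du 𝕜 I)) =>
        F.comp (tr 𝕜 (mulLRes 𝕜 I a fun x => (hI a x).1)))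
      (fun (F : Du 𝕜 (Du 𝕜 I)) (a : A) =>
        F.comp (tr 𝕜 (mulRRes 𝕜 I a fun x => (hI a x).2))) D2 := by
    intro a b
    have h := hD a b
    show inDu 𝕜 I (D (a * b)) = _
    rw [h]
    show inDu 𝕜 I (mulLRes 𝕜 I a (fun y => (hI a y).1) (D b)
        + mulRRes 𝕜 I b (fun y => (hI b y).2) (D a)) = _
    rw [map_add, hbitr, hbitr]
    rfl
  obtain ⟨F, hF⟩ := h1 D2 hder2
  set ψ0 : Du 𝕜 X := F.comp Φ with hψ0
  have hψ0apply : ∀ x : X, ψ0 x = F (Φ x) := fun x => rfl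
  -- `j.symm ψ0` belongs to `I`, by Helly's theorem and weak*-closedness of `I`
  have hb : ∀ t : Finset X, ∃ b : I, ∀ x ∈ t, Φ x b = F (Φ x) := by
    intro t
    obtain ⟨b, hbb⟩ := helly' F (fun i : t => Φ (i : X))
    exact ⟨b, fun x hx => hbb ⟨x, hx⟩⟩
  choose bb hbb using hb
  have hmem : j.symm ψ0 ∈ I := by
    have htend : Tendsto (fun t : Finset X => (show WeakDual 𝕜 X from j ((bb t : A))))
        atTop (𝓝 (show WeakDual 𝕜 X from ψ0)) := by
      rw [tendsto_iff_forall_eval_tendsto_topDualPairing]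
      intro y
      have hev : (fun _ : Finset X => topDualPairing 𝕜 X ψ0 y) =ᶠ[atTop]
          (fun t : Finset X => topDualPairing 𝕜 X (j ((bb t : A))) y) := by
        filter_upwards [Filter.eventually_ge_atTop ({y} : Finset X)] with t ht
        have hy : y ∈ t := ht (Finset.mem_singleton_self y)
        have h2 := hbb t y hy
        have h2' : ψ0 y = (j ((bb t : A))) y := by rw [hψ0apply, ← h2, Φapply]
        exact h2'
      exact tendsto_const_nhds.congr' hev
    have hmemS : ∀ t : Finset X, (show WeakDual 𝕜 X from j ((bb t : A))) ∈
        {x : WeakDual 𝕜 X | j.symm (show Du 𝕜 X from x) ∈ I} := by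
      intro t
      show j.symm (j ((bb t : A))) ∈ I
      rw [j.symm_apply_apply]
      exact (bb t).2
    have hS := hwcl.mem_of_tendsto htend (Filter.Eventually.of_forall hmemS)
    exact hS
  set x0 : I := ⟨j.symm ψ0, hmem⟩ with hx0
  have hjx0 : j ((x0 : A)) = ψ0 := j.apply_symm_apply ψ0
  refine ⟨x0, fun a => ?_⟩
  show D a = mulLRes 𝕜 I a (fun y => (hI a y).1) x0
      - mulRRes 𝕜 I a (fun y => (hI a y).2) x0
  have key : ∀ x : X,
      Φ x (D a) = Φ x (mulLRes 𝕜 I a (fun y => (hI a y).1) x0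
        - mulRRes 𝕜 I a (fun y => (hI a y).2) x0) := by
    intro x
    obtain ⟨yl, hyl⟩ := (hdual a x).2
    obtain ⟨yr, hyr⟩ := (hdual a x).1
    have peapply : ∀ (y : X) (b : A), predualEmbed 𝕜 j y b = (j b) y := by
      intro y b
      simp [predualEmbed, NormedSpace.dual_def]
    have hcompL : (Φ x).comp (mulLRes 𝕜 I a (fun y => (hI a y).1)) = Φ yl := by
      ext z
      show Φ x (mulLRes 𝕜 I a (fun y => (hI a y).1) z) = Φ yl z
      have hcoe : ((mulLRes 𝕜 I a (fun y => (hI a y).1) z : A)) = a * (z : A) := rfl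
      have h3 := congrArg (fun g : A →L[𝕜] 𝕜 => g ((z : A))) hyl
      simp only [ContinuousLinearMap.comp_apply, ContinuousLinearMap.mul_apply'] at h3
      rw [peapply, peapply] at h3
      rw [Φapply, Φapply, hcoe]
      exact h3.symm
    have hcompR : (Φ x).comp (mulRRes 𝕜 I a (fun y => (hI a y).2)) = Φ yr := by
      ext z
      show Φ x (mulRRes 𝕜 I a (fun y => (hI a y).2) z) = Φ yr z
      have hcoe : ((mulRRes 𝕜 I a (fun y => (hI a y).2) z : A)) = (z : A) * a := rfl
      have h3 := congrArg (fun g : A →L[𝕜] 𝕜 => g ((z : A))) hyr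
      simp only [ContinuousLinearMap.comp_apply, ContinuousLinearMap.flip_apply,
        ContinuousLinearMap.mul_apply'] at h3
      rw [peapply, peapply] at h3
      rw [Φapply, Φapply, hcoe]
      exact h3.symm
    have e1 : Φ x (D a) = F ((Φ x).comp (mulLRes 𝕜 I a (fun y => (hI a y).1)))
        - F ((Φ x).comp (mulRRes 𝕜 I a (fun y => (hI a y).2))) := by
      have h4 := hF a
      have h5 : Φ x (D a) = D2 a (Φ x) := by
        show Φ x (D a) = inDu 𝕜 I (D a) (Φ x)
        rw [NormedSpace.dual_def]
      rw [h5, h4]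
      show F (tr 𝕜 (mulLRes 𝕜 I a fun y => (hI a y).1) (Φ x))
          - F (tr 𝕜 (mulRRes 𝕜 I a fun y => (hI a y).2) (Φ x)) = _
      rw [htr, htr]
    rw [e1, hcompL, hcompR]
    have e2 : F (Φ yl) = Φ x (mulLRes 𝕜 I a (fun y => (hI a y).1) x0) := by
      have : F (Φ yl) = ψ0 yl := rfl
      rw [this, ← hjx0, ← Φapply, ← hcompL]
      rfl
    have e3 : F (Φ yr) = Φ x (mulRRes 𝕜 I a (fun y => (hI a y).2) x0) := by
      have : F (Φ yr) = ψ0 yr := rfl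
      rw [this, ← hjx0, ← Φapply, ← hcompR]
      rfl
    rw [e2, e3, map_sub]
  have hj : j ((D a : A)) = j (((mulLRes 𝕜 I a (fun y => (hI a y).1) x0
      - mulRRes 𝕜 I a (fun y => (hI a y).2) x0 : I) : A)) := by
    ext x
    rw [← Φapply, ← Φapply]
    exact key x
  exact Subtype.ext (j.injective hj)


end ArensPaper
end
end

section
/- Let A be a Banach algebra, B a Banach A-bimodule, and D : A → B* a continuous derivation. If the second transpose D'' : A** → B*** is a derivation (with A** carrying the first Arens product and B*** the Arens-extended module actions) and B* ⊆ D''(A**), then Z^ℓ_{A**}(B**) = B**. -/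
/-!
Common definitions: duals, biduals, Arens products, module actions,
derivations, first cohomology-vanishing predicates, weak-star continuity.
-/

noncomputable section

open ContinuousLinearMap Filter Topology Function

namespace ArensPaper

variable (𝕜 : Type) [RCLike 𝕜]

variable {X Y Z : Type} [NormedAddCommGroup X] [NormedSpace 𝕜 X]
  [NormedAddCommGroup Y] [NormedSpace 𝕜 Y] [NormedAddCommGroup Z] [NormedSpace 𝕜 Z]

set_option maxHeartbeats 1000000 in
/-- Let `A` be a Banach algebra, `B` a Banach `A`-bimodule, and `D : A → B*` a continuous
derivation.  If the second transpose `D'' : A** → B***` is a derivation and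
`B* ⊆ D''(A**)`, then `Z^ℓ_{A**}(B**) = B**`. -/
theorem statement17 {𝕜 : Type} [RCLike 𝕜] {A : Type}
    [NonUnitalNormedRing A] [NormedSpace 𝕜 A] [IsScalarTower 𝕜 A A]
    [SMulCommClass 𝕜 A A] [CompleteSpace A]
    {B : Type} [NormedAddCommGroup B] [NormedSpace 𝕜 B] [CompleteSpace B]
    (M : BimodStr 𝕜 (ContinuousLinearMap.mul 𝕜 A) B)
    -- `D : A → B*` is a continuous derivation
    (D : A →L[𝕜] Du 𝕜 B)
    (hD : IsDer 𝕜 (fun a b => a * b)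
      (fun (a : A) (f : Du 𝕜 B) => f.comp (M.r.flip a))
      (fun (f : Du 𝕜 B) (a : A) => f.comp (M.l a)) D)
    -- `D'' : A** → B***` is a derivation
    (hD'' : IsDer 𝕜 (fun m n => ar1 𝕜 (ContinuousLinearMap.mul 𝕜 A) m n)
      (fun (m : Bi 𝕜 A) (F : Du 𝕜 (Bi 𝕜 B)) => F.comp ((ar1 𝕜 M.r).flip m))
      (fun (F : Du 𝕜 (Bi 𝕜 B)) (m : Bi 𝕜 A) => F.comp (ar1 𝕜 M.l m))
      (bitr 𝕜 D))
    -- `B* ⊆ D''(A**)`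
    (hsub : ∀ f : Du 𝕜 B, ∃ m : Bi 𝕜 A, bitr 𝕜 D m = inDu 𝕜 (Du 𝕜 B) f) :
    -- `Z^ℓ_{A**}(B**) = B**`
    ∀ F : Bi 𝕜 B, WStarCont 𝕜 fun m : Bi 𝕜 A => ar1 𝕜 M.r F m := by
  intro F
  -- Key pointwise identity: the first Arens extension of the right module action
  -- agrees with its second Arens extension, thanks to `hD''` and `hsub`.
  have key : ∀ (m : Bi 𝕜 A) (f : Du 𝕜 B),
      ar1 𝕜 M.r F m f = m (F.comp (adj 𝕜 M.r.flip f)) := by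
    intro m f
    obtain ⟨n, hn⟩ := hsub f
    have h := congrArg (fun Φ : Bi 𝕜 (Du 𝕜 B) => Φ F) (hD'' m n)
    simp only [ContinuousLinearMap.add_apply, ContinuousLinearMap.comp_apply,
      ContinuousLinearMap.flip_apply, hn] at h
    -- h : bitr D (ar1 mul m n) F = inDu f (ar1 r F m) + bitr D m (ar1 l n F)
    have hχ : adj 𝕜 (adj 𝕜 (ContinuousLinearMap.mul 𝕜 A)) n (tr 𝕜 D F)
        = F.comp (adj 𝕜 M.r.flip f) + tr 𝕜 D (ar1 𝕜 M.l n F) := by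
      ext a
      have hψ : adj 𝕜 (ContinuousLinearMap.mul 𝕜 A) (tr 𝕜 D F) a
          = tr 𝕜 D (F.comp (tr 𝕜 (M.r.flip a))) + F.comp (adj 𝕜 M.l (D a)) := by
        ext b
        show F (D (a * b)) = F ((D b).comp (M.r.flip a)) + F ((D a).comp (M.l b))
        rw [hD a b]
        exact map_add F _ _
      have e0 : adj 𝕜 (adj 𝕜 (ContinuousLinearMap.mul 𝕜 A)) n (tr 𝕜 D F) a
          = n (adj 𝕜 (ContinuousLinearMap.mul 𝕜 A) (tr 𝕜 D F) a) := rfl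
      have e1 : n (tr 𝕜 D (F.comp (tr 𝕜 (M.r.flip a))))
          = F.comp (adj 𝕜 M.r.flip f) a :=
        congrArg (fun Φ : Bi 𝕜 (Du 𝕜 B) => Φ (F.comp (tr 𝕜 (M.r.flip a)))) hn
      have e2 : n (F.comp (adj 𝕜 M.l (D a))) = tr 𝕜 D (ar1 𝕜 M.l n F) a := rfl
      rw [e0, hψ, map_add, e1, e2]
      rfl
    have hL : bitr 𝕜 D (ar1 𝕜 (ContinuousLinearMap.mul 𝕜 A) m n) F
        = m (F.comp (adj 𝕜 M.r.flip f)) + bitr 𝕜 D m (ar1 𝕜 M.l n F) := by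
      have e3 : bitr 𝕜 D (ar1 𝕜 (ContinuousLinearMap.mul 𝕜 A) m n) F
          = m (adj 𝕜 (adj 𝕜 (ContinuousLinearMap.mul 𝕜 A)) n (tr 𝕜 D F)) := rfl
      rw [e3, hχ, map_add]
      rfl
    rw [hL] at h
    exact (add_right_cancel h).symm
  -- Weak*-continuity follows since the second Arens extension is weak*-continuous
  -- in its second variable.
  refine WeakDual.continuous_of_continuous_eval fun f => ?_
  exact (WeakDual.eval_continuous (F.comp (adj 𝕜 M.r.flip f))).congr
    fun x => (key x f).symm

end ArensPaper
end
end

section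
/- Let A be a Banach algebra and D : A → A* a continuous derivation such that A* ⊆ D''(A**). If the second transpose D'' : A** → A*** is a derivation (with A** carrying the first Arens product and A*** the corresponding dual A**-bimodule structure), then A is Arens regular. -/
/-!
Common definitions: duals, biduals, Arens products, module actions,
derivations, first cohomology-vanishing predicates, weak-star continuity.
-/

noncomputable section

open ContinuousLinearMap Filter Topology Function

namespace ArensPaper

variable (𝕜 : Type) [RCLike 𝕜]

variable {X Y Z : Type} [NormedAddCommGroup X] [NormedSpace 𝕜 X]
  [NormedAddCommGroup Y] [NormedSpace 𝕜 Y] [NormedAddCommGroup Z] [NormedSpace 𝕜 Z]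

set_option maxHeartbeats 2000000 in
/-- Let `A` be a Banach algebra and `D : A → A*` a continuous derivation such that
`A* ⊆ D''(A**)`.  If the second transpose `D'' : A** → A***` is a derivation, then `A`
is Arens regular. -/
theorem statement18 {𝕜 : Type} [RCLike 𝕜] {A : Type}
    [NonUnitalNormedRing A] [NormedSpace 𝕜 A] [IsScalarTower 𝕜 A A]
    [SMulCommClass 𝕜 A A] [CompleteSpace A]
    -- `D : A → A*` is a continuous derivation
    (D : A →L[𝕜] Du 𝕜 A)
    (hD : IsDer 𝕜 (fun a b => a * b)
      (fun (a : A) (f : Du 𝕜 A) => f.comp ((ContinuousLinearMap.mul 𝕜 A).flip a))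
      (fun (f : Du 𝕜 A) (a : A) => f.comp (ContinuousLinearMap.mul 𝕜 A a)) D)
    -- `A* ⊆ D''(A**)`
    (hsub : ∀ f : Du 𝕜 A, ∃ m : Bi 𝕜 A, bitr 𝕜 D m = inDu 𝕜 (Du 𝕜 A) f)
    -- `D'' : A** → A***` is a derivation
    (hD'' : IsDer 𝕜 (fun m n => ar1 𝕜 (ContinuousLinearMap.mul 𝕜 A) m n)
      (fun (m : Bi 𝕜 A) (F : Du 𝕜 (Bi 𝕜 A)) =>
        F.comp ((ar1 𝕜 (ContinuousLinearMap.mul 𝕜 A)).flip m))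
      (fun (F : Du 𝕜 (Bi 𝕜 A)) (m : Bi 𝕜 A) =>
        F.comp (ar1 𝕜 (ContinuousLinearMap.mul 𝕜 A) m))
      (bitr 𝕜 D)) :
    -- `A` is Arens regular
    ArensRegularBil 𝕜 (ContinuousLinearMap.mul 𝕜 A) := by
  classical
  set m := ContinuousLinearMap.mul 𝕜 A with hm
  apply ContinuousLinearMap.ext; intro F
  apply ContinuousLinearMap.ext; intro G
  apply ContinuousLinearMap.ext; intro f
  obtain ⟨M, hM⟩ := hsub f
  have hM' : ∀ K : Bi 𝕜 A, M (tr 𝕜 D K) = K f := fun K => DFunLike.congr_fun hM K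
  -- key identity
  have key : adj 𝕜 (adj 𝕜 m) M (tr 𝕜 D F)
      = adj 𝕜 (adj 𝕜 m.flip) F f + tr 𝕜 D (ar1 𝕜 m M F) := by
    ext a
    have expand : adj 𝕜 m (tr 𝕜 D F) a
        = tr 𝕜 D (bitr 𝕜 (m.flip a) F) + adj 𝕜 (adj 𝕜 m) F (D a) := by
      ext b
      have h1 := hD a b
      have : D (a * b) = (D b).comp (m.flip a) + (D a).comp (m b) := h1
      show F (D (m a b)) = F ((D b).comp (m.flip a)) + F (adj 𝕜 m (D a) b)
      have hmab : m a b = a * b := rfl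
      rw [hmab, this]
      rw [map_add]
      rfl
    show M (adj 𝕜 m (tr 𝕜 D F) a) = _
    rw [expand, map_add]
    have h2 : M (tr 𝕜 D (bitr 𝕜 (m.flip a) F)) = bitr 𝕜 (m.flip a) F f :=
      hM' (bitr 𝕜 (m.flip a) F)
    rw [h2]
    rfl
  -- hD'' instance
  have hE := DFunLike.congr_fun (hD'' G M) F
  -- hE : bitr D (ar1 m G M) F = bitr D M (ar1 m F G) + bitr D G (ar1 m M F)
  have hE' : ar1 𝕜 m G M (tr 𝕜 D F)
      = M (tr 𝕜 D (ar1 𝕜 m F G)) + G (tr 𝕜 D (ar1 𝕜 m M F)) := hE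
  have hL : ar1 𝕜 m G M (tr 𝕜 D F)
      = G (adj 𝕜 (adj 𝕜 m.flip) F f) + G (tr 𝕜 D (ar1 𝕜 m M F)) := by
    show G (adj 𝕜 (adj 𝕜 m) M (tr 𝕜 D F)) = _
    rw [key, map_add]
  have hfin : G (adj 𝕜 (adj 𝕜 m.flip) F f) = M (tr 𝕜 D (ar1 𝕜 m F G)) :=
    add_right_cancel (hL.symm.trans hE')
  show ar1 𝕜 m F G f = ar2 𝕜 m F G f
  rw [← hM' (ar1 𝕜 m F G), ← hfin]
  rfl


end ArensPaper
end
end
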